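/- Let A be a commutative ring, x ∈ A, and K = (⋯ → K_s → K_{s−1} → ⋯ → K_1 → K_0 → 0) a complex of A-modules whose homology is concentrated in degree 0. If multiplication by x is injective on every chain module K_i and also injective on H_0(K), then the quotient complex K/xK has its homology concentrated in degree 0, where it is isomorphic to H_0(K)/xH_0(K). -/
import Mathlib


open Pointwise

/-- Let `K = (⋯ → K_1 → K_0 → 0)` be a complex of `A`-modules whose homology is
concentrated in degree `0`.  If multiplication by `x` is injective on every `K_i` and on
`H_0(K) = K_0 / im(d_0)`, then the quotient complex `K/xK` has homology concentrated in
degree `0`, where it equals `H_0(K)/x·H_0(K)`. -/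
theorem quotient_complex_homology_concentrated
    (A : Type) [CommRing A] (x : A)
    (K : ℕ → Type) [∀ i, AddCommGroup (K i)] [∀ i, Module A (K i)]
    (d : ∀ i : ℕ, K (i + 1) →ₗ[A] K i)
    (hcx : ∀ i : ℕ, d i ∘ₗ d (i + 1) = 0)
    -- the homology of `K` is concentrated in degree 0:
    (hexact : ∀ i : ℕ, Function.Exact (d (i + 1)) (d i))
    -- multiplication by `x` is injective on every chain module and on `H_0(K)`:
    (hinj : ∀ i : ℕ, Function.Injective (fun m : K i => x • m))
    (hinj0 : Function.Injective
      (fun m : K 0 ⧸ LinearMap.range (d 0) => x • m))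
    -- `d'` is the complex `K/xK` of quotients with the induced differentials:
    (d' : ∀ i : ℕ, (K (i + 1) ⧸ (x • (⊤ : Submodule A (K (i + 1))))) →ₗ[A]
      (K i ⧸ (x • (⊤ : Submodule A (K i)))))
    (hd' : ∀ i : ℕ, d' i ∘ₗ (x • (⊤ : Submodule A (K (i + 1)))).mkQ =
      (x • (⊤ : Submodule A (K i))).mkQ ∘ₗ d i) :
    -- `K/xK` has homology concentrated in degree 0, where it is `H_0(K)/x·H_0(K)`:
    (∀ i : ℕ, Function.Exact (d' (i + 1)) (d' i)) ∧
    Nonempty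
      (((K 0 ⧸ (x • (⊤ : Submodule A (K 0)))) ⧸ LinearMap.range (d' 0)) ≃ₗ[A]
        ((K 0 ⧸ LinearMap.range (d 0)) ⧸
          (x • (⊤ : Submodule A (K 0 ⧸ LinearMap.range (d 0)))))) := by
  have hmem : ∀ (M : Type) (_ : AddCommGroup M) (_ : Module A M) (m : M),
      m ∈ x • (⊤ : Submodule A M) ↔ ∃ n : M, x • n = m := by
    intro M _ _ m
    rw [← SetLike.mem_coe, Submodule.coe_pointwise_smul, Set.mem_smul_set]
    simp
  have hd'app : ∀ (i : ℕ) (m : K (i + 1)),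
      d' i (Submodule.Quotient.mk m) = Submodule.Quotient.mk (d i m) := by
    intro i m
    have := LinearMap.congr_fun (hd' i) m
    simpa [Submodule.mkQ_apply] using this
  constructor
  · intro i yq
    constructor
    · intro h0
      obtain ⟨y, rfl⟩ := Submodule.mkQ_surjective _ yq
      rw [Submodule.mkQ_apply] at h0 ⊢
      have h1 : (Submodule.Quotient.mk (d i y) :
          K i ⧸ (x • (⊤ : Submodule A (K i)))) = 0 := by
        rw [← hd'app i y]; exact h0
      have h2 : d i y ∈ x • (⊤ : Submodule A (K i)) :=
        (Submodule.Quotient.mk_eq_zero _).mp h1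
      obtain ⟨z, hz⟩ := (hmem _ _ _ _).mp h2
      have hw : ∃ w : K (i + 1), d i w = z := by
        cases i with
        | zero =>
          have hz0 : (x • (Submodule.Quotient.mk z :
              K 0 ⧸ LinearMap.range (d 0))) = 0 := by
            rw [← Submodule.Quotient.mk_smul, hz, Submodule.Quotient.mk_eq_zero]
            exact ⟨y, rfl⟩
          have : (Submodule.Quotient.mk z :
              K 0 ⧸ LinearMap.range (d 0)) = 0 := by
            apply hinj0
            simpa using hz0
          exact (Submodule.Quotient.mk_eq_zero _).mp this
        | succ j =>
          have h3 : x • d j z = 0 := by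
            rw [← map_smul, hz]
            exact LinearMap.congr_fun (hcx j) y
          have h4 : d j z = 0 := by
            apply hinj j
            simpa using h3
          exact (hexact j z).mp h4
      obtain ⟨w, hw⟩ := hw
      have h5 : d i (y - x • w) = 0 := by
        rw [map_sub, map_smul, hw, hz, sub_self]
      obtain ⟨u, hu⟩ := (hexact i _).mp h5
      refine ⟨Submodule.Quotient.mk u, ?_⟩
      rw [hd'app (i + 1) u, hu]
      rw [Submodule.Quotient.eq]
      have : -(x • w) ∈ x • (⊤ : Submodule A (K (i + 1))) := by
        apply neg_mem
        exact Submodule.smul_mem_pointwise_smul w x ⊤ trivial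
      simpa using this
    · rintro ⟨v, rfl⟩
      obtain ⟨u, rfl⟩ := Submodule.mkQ_surjective _ v
      have hz : d i (d (i + 1) u) = 0 := by
        simpa using LinearMap.congr_fun (hcx i) u
      rw [Submodule.mkQ_apply, hd'app (i + 1) u, hd'app i (d (i + 1) u), hz]
      simp
  · -- the isomorphism of degree-zero homology
    set S0 : Submodule A (K 0) := x • (⊤ : Submodule A (K 0)) with hS0
    set N : Submodule A (K 0) := LinearMap.range (d 0) with hN
    have hrange : LinearMap.range (d' 0) = N.map S0.mkQ := by
      have h1 : LinearMap.range (d' 0) = LinearMap.range (d' 0 ∘ₗ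
          (x • (⊤ : Submodule A (K 1))).mkQ) := by
        rw [LinearMap.range_comp, Submodule.range_mkQ, Submodule.map_top]
      rw [h1, hd' 0, LinearMap.range_comp]
    have hsm : (x • (⊤ : Submodule A (K 0 ⧸ N))) = S0.map N.mkQ := by
      rw [hS0, Submodule.map_pointwise_smul, Submodule.map_top, Submodule.range_mkQ]
    refine ⟨?_⟩
    exact ((Submodule.quotEquivOfEq _ _ hrange).trans
      ((Submodule.quotientQuotientEquivQuotientSup S0 N).trans
      ((Submodule.quotEquivOfEq _ _ (sup_comm S0 N)).trans
      ((Submodule.quotientQuotientEquivQuotientSup N S0).symm.trans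
      (Submodule.quotEquivOfEq _ _ hsm.symm)))))
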